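/- For every integer n ≥ 0, the set of roots in H of the polynomial AS^{n+1}(x) − t^{−1} (where AS(x) = x^p − x) equals {s_n + c : c ∈ F with AS^{n+1}(c) = 0}, where constants c ∈ F are viewed as elements of H; this set has exactly p^{n+1} elements, and every root u ≠ s_n satisfies v(s_n − u) = 0 (i.e., the Krasner constant of s_n is 0). -/

import Mathlib

/-!
Common setup: `p` a prime, `F` an algebraic closure of `𝔽_p`, `H = F((t^ℚ))` the Hahn series
field with its canonical additive valuation `v` (minimum of the support), the Newton–Puiseux
subfield `K ⊆ H`, the elements `s_n`, the series `s = ∑ tⁿ·s_n`, the truncations `s_{n,i}`,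
the rationals `δ(n,i) = n - 1/p^(i+1)`, and the depth-zero valuations `ω_{a,δ}`.
-/

open Polynomial HahnSeries

variable (p : ℕ) [Fact p.Prime]

/-- `F`, an algebraic closure of `𝔽_p`. -/
abbrev Fbar : Type := AlgebraicClosure (ZMod p)

/-- The Hahn series field `H = F((t^ℚ))`. -/
abbrev H : Type := HahnSeries ℚ (Fbar p)

/-- The additive valuation `v(f) = min (supp f)`, with `v 0 = ∞`. -/
noncomputable def v (f : H p) : WithTop ℚ := f.orderTop

/-- The exponent `-1/p^(j+1)`. -/
def expo (j : ℕ) : ℚ := -((p : ℚ) ^ (j + 1))⁻¹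

lemma one_lt_p : (1 : ℚ) < p := by
  exact_mod_cast (Fact.out : p.Prime).one_lt

lemma expo_mono : Monotone (expo p) := by
  intro j k hjk
  have hp : (1 : ℚ) < p := one_lt_p p
  have h1 : (0 : ℚ) < (p : ℚ) ^ (j + 1) := pow_pos (lt_trans one_pos hp) _
  have h2 : (p : ℚ) ^ (j + 1) ≤ (p : ℚ) ^ (k + 1) :=
    pow_le_pow_right₀ (le_of_lt hp) (by omega)
  have := inv_anti₀ h1 h2
  simp only [expo, neg_le_neg_iff]
  linarith

lemma isPWO_univ_nat : (Set.univ : Set ℕ).IsPWO :=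
  (Set.isWF_univ_iff.2 inferInstance).isPWO

-- `s_n = ∑_{j ≥ n} C(j,n)·t^(-1/p^(j+1))`, where `C(j,n)` is `j.choose n` reduced mod `p`.
open Classical in
noncomputable def sn (n : ℕ) : H p where
  coeff q := if h : ∃ j : ℕ, n ≤ j ∧ q = expo p j then (Nat.choose h.choose n : Fbar p) else 0
  isPWO_support' := by
    apply ((isPWO_univ_nat.image_of_monotone (expo_mono p)).mono)
    intro q hq
    simp only [Function.mem_support] at hq
    have h : ∃ j : ℕ, n ≤ j ∧ q = expo p j := by
      by_contra h
      rw [dif_neg h] at hq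
      exact hq rfl
    obtain ⟨j, _, rfl⟩ := h
    exact ⟨j, Set.mem_univ j, rfl⟩

-- `s = ∑_{n ≥ 0} tⁿ·s_n`, i.e. the series with coefficient `C(j,n)` at `n - 1/p^(j+1)`.
open Classical in
noncomputable def sH : H p where
  coeff q := if h : ∃ nj : ℕ × ℕ, nj.1 ≤ nj.2 ∧ q = (nj.1 : ℚ) + expo p nj.2 then
      (Nat.choose h.choose.2 h.choose.1 : Fbar p) else 0
  isPWO_support' := by
    have hmono : Monotone (fun nj : ℕ × ℕ => (nj.1 : ℚ) + expo p nj.2) := by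
      intro a b hab
      exact add_le_add (by exact_mod_cast hab.1) (expo_mono p hab.2)
    apply ((isPWO_univ_nat.prod isPWO_univ_nat).image_of_monotone hmono).mono
    intro q hq
    simp only [Function.mem_support] at hq
    have h : ∃ nj : ℕ × ℕ, nj.1 ≤ nj.2 ∧ q = (nj.1 : ℚ) + expo p nj.2 := by
      by_contra h
      rw [dif_neg h] at hq
      exact hq rfl
    obtain ⟨nj, _, rfl⟩ := h
    exact ⟨nj, by simp [Set.mem_prod], rfl⟩

/-- The additive map `ℤ →+ ℚ`, `k ↦ k/N`. -/
def embQ (N : ℕ) : ℤ →+ ℚ where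
  toFun k := (k : ℚ) / (N : ℚ)
  map_zero' := by simp
  map_add' := by intros; push_cast; ring

lemma embQ_inj {N : ℕ} (hN : 0 < N) : Function.Injective (embQ N) := by
  intro a b hab
  have hN' : (0 : ℚ) < N := by exact_mod_cast hN
  simpa [embQ, div_eq_div_iff hN'.ne' hN'.ne', hN'.ne'] using hab

lemma embQ_mono {N : ℕ} (hN : 0 < N) : ∀ g g' : ℤ, embQ N g ≤ embQ N g' ↔ g ≤ g' := by
  intro g g'
  have hN' : (0 : ℚ) < N := by exact_mod_cast hN
  simp [embQ, div_le_div_iff_of_pos_right hN', Int.cast_le]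

lemma embQ_strictMono {N : ℕ} (hN : 0 < N) : StrictMono (embQ N) := by
  have := embQ_mono hN
  exact strictMono_of_le_iff_le fun a b => (this a b).symm

/-- Laurent series (Hahn series over `ℤ`) mapped into `H p` via `k ↦ k/N`. -/
noncomputable def laurentInc (N : ℕ) (hN : 0 < N) : HahnSeries ℤ (Fbar p) →+* H p :=
  HahnSeries.embDomainRingHom (embQ N) (embQ_inj hN) (embQ_mono hN)

lemma mem_range_laurentInc_iff {N : ℕ} (hN : 0 < N) (f : H p) :
    (∃ g, laurentInc p N hN g = f) ↔ ∀ q ∈ f.support, ∃ k : ℤ, q = (k : ℚ) / N := by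
  constructor
  · rintro ⟨g, rfl⟩ q hq
    obtain ⟨k, -, rfl⟩ := HahnSeries.support_embDomain_subset hq
    exact ⟨k, rfl⟩
  · intro hf
    classical
    have hpwo : (Function.support fun k : ℤ => f.coeff (embQ N k)).IsPWO := by
      apply Set.IsWF.isPWO
      rw [Set.isWF_iff_no_descending_seq]
      intro φ hφ hmem
      apply Set.isWF_iff_no_descending_seq.mp f.isWF_support (fun n => embQ N (φ n))
        ((embQ_strictMono hN).comp_strictAnti hφ)
      intro n
      exact hmem n
    refine ⟨⟨fun k => f.coeff (embQ N k), hpwo⟩, ?_⟩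
    apply HahnSeries.ext
    funext q
    by_cases hq : q ∈ Set.range (embQ N)
    · obtain ⟨k, rfl⟩ := hq
      exact HahnSeries.embDomain_mk_coeff (embQ_inj hN) (embQ_mono hN)
    · rw [show (laurentInc p N hN ⟨fun k => f.coeff (embQ N k), hpwo⟩).coeff q = 0 from
        HahnSeries.embDomain_notin_range hq]
      by_contra hne
      obtain ⟨k, hk⟩ := hf q (by simpa [HahnSeries.mem_support] using Ne.symm hne)
      exact hq ⟨k, hk.symm⟩

/-- The Newton–Puiseux field `K`: Hahn series whose support lies in `(1/N)·ℤ` for some `N > 0`. -/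
noncomputable def KNP : Subfield (H p) where
  carrier := {f : H p | ∃ N : ℕ, 0 < N ∧ ∀ q ∈ f.support, ∃ k : ℤ, q = (k : ℚ) / N}
  zero_mem' := ⟨1, one_pos, by simp⟩
  one_mem' := by
    refine ⟨1, one_pos, fun q hq => ?_⟩
    rw [HahnSeries.support_one] at hq
    exact ⟨0, by simp [Set.mem_singleton_iff.mp hq]⟩
  add_mem' := by
    rintro x y ⟨N, hN, hx⟩ ⟨M, hM, hy⟩
    refine ⟨N * M, Nat.mul_pos hN hM, fun q hq => ?_⟩
    rcases HahnSeries.support_add_subset x y hq with h | h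
    · obtain ⟨k, rfl⟩ := hx q h
      refine ⟨k * M, ?_⟩
      have hM' : (M : ℚ) ≠ 0 := by exact_mod_cast hM.ne'
      have hN' : (N : ℚ) ≠ 0 := by exact_mod_cast hN.ne'
      push_cast
      field_simp
    · obtain ⟨k, rfl⟩ := hy q h
      refine ⟨k * N, ?_⟩
      have hM' : (M : ℚ) ≠ 0 := by exact_mod_cast hM.ne'
      have hN' : (N : ℚ) ≠ 0 := by exact_mod_cast hN.ne'
      push_cast
      field_simp
  neg_mem' := by
    rintro x ⟨N, hN, hx⟩
    exact ⟨N, hN, fun q hq => hx q (by rwa [HahnSeries.support_neg] at hq)⟩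
  mul_mem' := by
    rintro x y ⟨N, hN, hx⟩ ⟨M, hM, hy⟩
    refine ⟨N * M, Nat.mul_pos hN hM, fun q hq => ?_⟩
    obtain ⟨q₁, hq₁, q₂, hq₂, rfl⟩ := HahnSeries.support_mul_subset hq
    obtain ⟨k₁, rfl⟩ := hx q₁ hq₁
    obtain ⟨k₂, rfl⟩ := hy q₂ hq₂
    refine ⟨k₁ * M + k₂ * N, ?_⟩
    have hM' : (M : ℚ) ≠ 0 := by exact_mod_cast hM.ne'
    have hN' : (N : ℚ) ≠ 0 := by exact_mod_cast hN.ne'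
    push_cast
    field_simp
  inv_mem' := by
    rintro x ⟨N, hN, hx⟩
    obtain ⟨g, rfl⟩ := (mem_range_laurentInc_iff p hN x).mpr hx
    rw [← map_inv₀]
    exact ⟨N, hN, ((mem_range_laurentInc_iff p hN _).mp ⟨g⁻¹, rfl⟩)⟩

/-- The truncation `s_{n,i} = ∑_{m<n} tᵐ·s_m + tⁿ·∑_{n ≤ j < i} C(j,n)·t^(-1/p^(j+1))`. -/
noncomputable def strunc (n i : ℕ) : H p :=
  (∑ m ∈ Finset.range n, HahnSeries.single (m : ℚ) 1 * sn p m)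
  + HahnSeries.single (n : ℚ) 1 *
      (∑ j ∈ Finset.Ico n i, HahnSeries.single (expo p j) ((Nat.choose j n : Fbar p)))

/-- `δ(n,i) = n - 1/p^(i+1)`. -/
def dlt (n i : ℕ) : ℚ := (n : ℚ) - ((p : ℚ) ^ (i + 1))⁻¹

/-- The depth-zero valuation `ω_{a,δ}(f) = min_ℓ (v(a_ℓ) + ℓ·δ)`, where
`f = ∑_ℓ a_ℓ·(x-a)^ℓ` is the Taylor expansion of `f` at `a`. -/
noncomputable def om (a : H p) (δ : ℚ) (f : Polynomial (H p)) : WithTop ℚ :=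
  (Finset.range (f.natDegree + 1)).inf
    fun ℓ => v p ((Polynomial.taylor a f).coeff ℓ) + (((ℓ : ℚ) * δ : ℚ) : WithTop ℚ)

-- The degree `[K(b) : K]` of an element `b ∈ H` over the Newton–Puiseux field `K`.
set_option synthInstance.maxHeartbeats 1000000 in
noncomputable def degK (b : H p) : ℕ :=
  Module.finrank (KNP p) (IntermediateField.adjoin (KNP p) {b})

lemma tinv_mem : HahnSeries.single (-1 : ℚ) (1 : Fbar p) ∈ KNP p := by
  refine ⟨1, one_pos, fun q hq => ?_⟩
  have := HahnSeries.support_single_subset hq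
  exact ⟨-1, by simp [Set.mem_singleton_iff.mp this]⟩

/-- `t^(-1) = single (-1) 1` as an element of `K`. -/
noncomputable def tinv : KNP p := ⟨HahnSeries.single (-1 : ℚ) (1 : Fbar p), tinv_mem p⟩

/-- The `k`-fold composition of the Artin–Schreier polynomial `AS(x) = x^p - x` over `H`,
with `AS^0(x) = x`. -/
noncomputable def ASiterH : ℕ → Polynomial (H p)
  | 0 => X
  | k + 1 => ((X : Polynomial (H p)) ^ p - X).comp (ASiterH k)

/-! ### Auxiliary lemmas for `AS_roots_krasner` -/

section ASAux

variable (p : ℕ) [Fact p.Prime]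

lemma hp_pos : (0 : ℚ) < p := lt_trans one_pos (one_lt_p p)

lemma one_lt_pow_p (j : ℕ) : (1 : ℚ) < (p : ℚ) ^ (j + 1) := by
  have h1 : (p : ℚ) ^ 1 ≤ (p : ℚ) ^ (j + 1) :=
    pow_le_pow_right₀ (le_of_lt (one_lt_p p)) (by omega)
  have := one_lt_p p
  rw [pow_one] at h1
  linarith

lemma expo_neg (j : ℕ) : expo p j < 0 := by
  have : (0 : ℚ) < ((p : ℚ) ^ (j + 1))⁻¹ := inv_pos.2 (by linarith [one_lt_pow_p p j])
  simp only [expo]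
  linarith

lemma expo_gt_neg_one (j : ℕ) : -1 < expo p j := by
  have h1 : (1 : ℚ) < (p : ℚ) ^ (j + 1) := one_lt_pow_p p j
  have h2 : (0 : ℚ) < ((p : ℚ) ^ (j + 1))⁻¹ := inv_pos.2 (by linarith)
  have h3 : (p : ℚ) ^ (j + 1) * ((p : ℚ) ^ (j + 1))⁻¹ = 1 :=
    mul_inv_cancel₀ (by linarith)
  have : ((p : ℚ) ^ (j + 1))⁻¹ < 1 := by nlinarith
  simp only [expo]
  linarith

lemma expo_ne_neg_one (j : ℕ) : expo p j ≠ -1 := ne_of_gt (expo_gt_neg_one p j)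

lemma pow_p_strictMono : StrictMono (fun m : ℕ => (p : ℚ) ^ m) := fun a b h => by
  exact pow_lt_pow_right₀ (one_lt_p p) h

lemma expo_strictMono : StrictMono (expo p) := by
  intro j k h
  have := pow_p_strictMono p (show j + 1 < k + 1 by omega)
  simp only at this
  have h1 : (0 : ℚ) < (p : ℚ) ^ (j + 1) := by linarith [one_lt_pow_p p j]
  have := inv_strictAnti₀ h1 this
  simp only [expo]
  linarith

lemma expo_inj : Function.Injective (expo p) := (expo_strictMono p).injective

lemma psmul_expo_succ (j : ℕ) : (p : ℚ) * expo p (j + 1) = expo p j := by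
  have h0 : (p : ℚ) ≠ 0 := ne_of_gt (hp_pos p)
  have h1 : (p : ℚ) ^ (j + 1) ≠ 0 := by positivity
  simp only [expo]
  rw [show j + 1 + 1 = (j + 1) + 1 from rfl, pow_succ]
  field_simp

lemma psmul_expo_zero : (p : ℚ) * expo p 0 = -1 := by
  have h0 : (p : ℚ) ≠ 0 := ne_of_gt (hp_pos p)
  simp only [expo, pow_one]
  field_simp
  simp

instance charP_H : CharP (H p) p :=
  charP_of_injective_ringHom (HahnSeries.C_injective (Γ := ℚ) (R := Fbar p)) p

lemma natCast_pow_p (m : ℕ) : ((m : Fbar p)) ^ p = (m : Fbar p) := by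
  have h1 : ((m : Fbar p)) = algebraMap (ZMod p) (Fbar p) (m : ZMod p) := by
    rw [map_natCast]
  rw [h1, ← map_pow, ZMod.pow_card]

lemma sn_coeff_expo' (n k : ℕ) :
    (sn p n).coeff (expo p k) = if n ≤ k then (k.choose n : Fbar p) else 0 := by
  classical
  have hco : (sn p n).coeff (expo p k) =
      (if h : ∃ j : ℕ, n ≤ j ∧ expo p k = expo p j then
        (Nat.choose h.choose n : Fbar p) else 0) := rfl
  rw [hco]
  by_cases h : n ≤ k
  · have hex : ∃ j : ℕ, n ≤ j ∧ expo p k = expo p j := ⟨k, h, rfl⟩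
    rw [dif_pos hex, if_pos h]
    obtain ⟨h1, h2⟩ := hex.choose_spec
    exact (congrArg (fun j : ℕ => ((j.choose n : Fbar p))) (expo_inj p h2)).symm
  · rw [dif_neg, if_neg h]
    rintro ⟨j, hj, hq⟩
    exact h (by rwa [expo_inj p hq])

lemma sn_coeff_of_ne (n : ℕ) {q : ℚ} (h : ∀ j : ℕ, q ≠ expo p j) :
    (sn p n).coeff q = 0 := by
  classical
  have hco : (sn p n).coeff q =
      (if h : ∃ j : ℕ, n ≤ j ∧ q = expo p j then
        (Nat.choose h.choose n : Fbar p) else 0) := rfl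
  rw [hco, dif_neg]
  rintro ⟨j, hj, hq⟩
  exact h j hq

lemma sn_supp (n : ℕ) : (sn p n).support ⊆ {q : ℚ | expo p n ≤ q ∧ q < 0} := by
  intro q hq
  rw [HahnSeries.mem_support] at hq
  by_cases hex : ∃ j : ℕ, q = expo p j
  · obtain ⟨j, rfl⟩ := hex
    rw [sn_coeff_expo'] at hq
    by_cases hnj : n ≤ j
    · exact ⟨expo_mono p hnj, expo_neg p j⟩
    · exact absurd (if_neg hnj) hq
  · push_neg at hex
    exact absurd (sn_coeff_of_ne p n hex) hq

/-- The partial sum `∑_{n ≤ j < m} C(j,n) t^{expo j}`. -/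
noncomputable def fpart (n m : ℕ) : H p :=
  ∑ j ∈ Finset.Ico n m, HahnSeries.single (expo p j) ((j.choose n : Fbar p))

lemma sum_coeff {ι : Type*} (s : Finset ι) (f : ι → H p) (q : ℚ) :
    (∑ i ∈ s, f i).coeff q = ∑ i ∈ s, (f i).coeff q := by
  classical
  induction s using Finset.induction with
  | empty => simp [HahnSeries.coeff_zero]
  | insert a s hx ih =>
    rw [Finset.sum_insert hx, Finset.sum_insert hx, HahnSeries.coeff_add, ih]

lemma fpart_coeff_expo (n m k : ℕ) :
    (fpart p n m).coeff (expo p k) =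
      if k ∈ Finset.Ico n m then (k.choose n : Fbar p) else 0 := by
  rw [fpart, sum_coeff]
  have hcongr : ∀ j ∈ Finset.Ico n m,
      (HahnSeries.single (expo p j) ((j.choose n : Fbar p))).coeff (expo p k)
        = if j = k then ((j.choose n : Fbar p)) else 0 := by
    intro j _
    by_cases h : j = k
    · subst h; rw [if_pos rfl, HahnSeries.coeff_single_same]
    · rw [if_neg h, HahnSeries.coeff_single_of_ne (fun hc => h (expo_inj p hc).symm)]
  rw [Finset.sum_congr rfl hcongr, Finset.sum_ite_eq' (Finset.Ico n m) k
    (fun j => ((j.choose n : Fbar p)))]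

lemma fpart_coeff_of_ne (n m : ℕ) {q : ℚ} (h : ∀ j : ℕ, q ≠ expo p j) :
    (fpart p n m).coeff q = 0 := by
  rw [fpart, sum_coeff]
  refine Finset.sum_eq_zero fun j _ => ?_
  exact HahnSeries.coeff_single_of_ne (h j)

lemma tail_supp (n m : ℕ) (hnm : n ≤ m) :
    (sn p n - fpart p n m).support ⊆ {q : ℚ | expo p m ≤ q ∧ q < 0} := by
  intro q hq
  rw [HahnSeries.mem_support, HahnSeries.coeff_sub] at hq
  by_cases hex : ∃ j : ℕ, q = expo p j
  · obtain ⟨j, rfl⟩ := hex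
    rw [sn_coeff_expo', fpart_coeff_expo] at hq
    by_cases hj : m ≤ j
    · exact ⟨expo_mono p hj, expo_neg p j⟩
    · exfalso; apply hq
      by_cases hnj : n ≤ j
      · rw [if_pos hnj, if_pos (Finset.mem_Ico.mpr ⟨hnj, by omega⟩), sub_self]
      · rw [if_neg hnj, if_neg (fun hmem => hnj (Finset.mem_Ico.mp hmem).1), sub_zero]
  · push_neg at hex
    exfalso; apply hq
    rw [sn_coeff_of_ne p n hex, fpart_coeff_of_ne p n m hex, sub_zero]

lemma pow_support_subset {f : H p} {a : ℚ}
    (ha : f.support ⊆ {q : ℚ | a ≤ q ∧ q < 0}) :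
    ∀ k : ℕ, 1 ≤ k → (f ^ k).support ⊆ {q : ℚ | (k : ℚ) * a ≤ q ∧ q < 0} := by
  intro k hk
  induction k with
  | zero => omega
  | succ k ih =>
    rcases Nat.lt_or_ge 1 (k + 1) with h1 | h1
    · have hk1 : 1 ≤ k := by omega
      intro q hq
      rw [pow_succ] at hq
      have hq' := HahnSeries.support_mul_subset hq
      rw [Set.mem_add] at hq'
      obtain ⟨q1, hq1, q2, hq2, rfl⟩ := hq'
      obtain ⟨ha1, hb1⟩ := ih hk1 hq1
      obtain ⟨ha2, hb2⟩ := ha hq2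
      constructor
      · push_cast; linarith
      · linarith
    · have : k = 0 := by omega
      subst this
      intro q hq
      rw [pow_one] at hq
      obtain ⟨h1', h2'⟩ := ha hq
      exact ⟨by push_cast; linarith, h2'⟩

lemma fpart_pow (n m : ℕ) :
    (fpart p n m) ^ p = ∑ j ∈ Finset.Ico n m,
      HahnSeries.single ((p : ℕ) • expo p j) ((j.choose n : Fbar p)) := by
  rw [← frobenius_def (R := H p) (p := p), fpart, map_sum]
  refine Finset.sum_congr rfl fun j _ => ?_
  rw [frobenius_def, HahnSeries.single_pow, natCast_pow_p]

/-- `prv n` is `s_{n-1}`, with `prv 0 = t⁻¹`. -/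
noncomputable def prv : ℕ → H p
  | 0 => HahnSeries.single (-1 : ℚ) 1
  | (k + 1) => sn p k

lemma prv_coeff_expo (n k : ℕ) :
    (prv p n).coeff (expo p k) =
      if n ≤ k + 1 ∧ 1 ≤ n then (k.choose (n - 1) : Fbar p) else 0 := by
  match n with
  | 0 =>
    rw [if_neg (by omega), prv]
    exact HahnSeries.coeff_single_of_ne (expo_ne_neg_one p k)
  | (n' + 1) =>
    rw [prv, sn_coeff_expo']
    by_cases h : n' ≤ k
    · rw [if_pos h, if_pos (by omega)]
      simp
    · rw [if_neg h, if_neg (by omega)]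

lemma prv_coeff_neg_one (n : ℕ) :
    (prv p n).coeff (-1 : ℚ) = if n = 0 then 1 else 0 := by
  match n with
  | 0 =>
    rw [if_pos rfl, prv, HahnSeries.coeff_single_same]
  | (n' + 1) =>
    rw [if_neg (by omega), prv]
    exact sn_coeff_of_ne p n' (fun j => (expo_ne_neg_one p j).symm)

lemma prv_coeff_other (n : ℕ) {q : ℚ} (h1 : ∀ j : ℕ, q ≠ expo p j) (h2 : q ≠ -1) :
    (prv p n).coeff q = 0 := by
  match n with
  | 0 => exact HahnSeries.coeff_single_of_ne h2
  | (n' + 1) => exact sn_coeff_of_ne p n' h1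

lemma one_le_p : 1 ≤ p := le_of_lt (Fact.out : p.Prime).one_lt

end ASAux

section ASMain

variable (p : ℕ) [Fact p.Prime]

lemma frob_sn (n : ℕ) : (sn p n) ^ p = sn p n + prv p n := by
  apply HahnSeries.ext
  funext q
  rw [HahnSeries.coeff_add]
  by_cases hq0 : 0 ≤ q
  · have h1 : (sn p n ^ p).coeff q = 0 := by
      by_contra h
      have hmem := pow_support_subset p (sn_supp p n) p (one_le_p p)
        ((HahnSeries.mem_support _ _).2 h)
      exact absurd hmem.2 (not_lt.2 hq0)
    have hne : ∀ j : ℕ, q ≠ expo p j :=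
      fun j hj => absurd (hj ▸ hq0) (not_le.2 (expo_neg p j))
    have h2 : (sn p n).coeff q = 0 := sn_coeff_of_ne p n hne
    have h3 : (prv p n).coeff q = 0 :=
      prv_coeff_other p n hne (by intro h; rw [h] at hq0; norm_num at hq0)
    rw [h1, h2, h3, add_zero]
  · push_neg at hq0
    obtain ⟨M, hM⟩ := pow_unbounded_of_one_lt ((-q)⁻¹) (one_lt_p p)
    have hqm : q < expo p (max M n) := by
      have hq' : (0 : ℚ) < -q := by linarith
      have h1 : ((-q))⁻¹ < (p : ℚ) ^ (max M n + 1) :=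
        lt_of_lt_of_le hM (pow_le_pow_right₀ (le_of_lt (one_lt_p p)) (by omega))
      have h3 : ((p : ℚ) ^ (max M n + 1))⁻¹ < -q := by
        have h4 := inv_strictAnti₀ (inv_pos.2 hq') h1
        rwa [inv_inv] at h4
      simp only [expo]
      linarith
    set m' : ℕ := max M n with hm'
    have hnm' : n ≤ m' := le_max_right M n
    have hsn : sn p n = fpart p n (m' + 1) + (sn p n - fpart p n (m' + 1)) := by ring
    have hsplit : sn p n ^ p
        = fpart p n (m' + 1) ^ p + (sn p n - fpart p n (m' + 1)) ^ p := by
      conv_lhs => rw [hsn]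
      rw [add_pow_char]
    have hrsupp := tail_supp p n (m' + 1) (by omega)
    have hrp : ((sn p n - fpart p n (m' + 1)) ^ p).coeff q = 0 := by
      by_contra h
      have hmem := pow_support_subset p hrsupp p (one_le_p p)
        ((HahnSeries.mem_support _ _).2 h)
      have he : (p : ℚ) * expo p (m' + 1) = expo p m' := psmul_expo_succ p m'
      linarith [hmem.1, hqm]
    have hrc : (sn p n - fpart p n (m' + 1)).coeff q = 0 := by
      by_contra h
      have hmem := hrsupp ((HahnSeries.mem_support _ _).2 h)
      have hlt : expo p m' < expo p (m' + 1) := expo_strictMono p (by omega)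
      linarith [hmem.1]
    have hsc : (sn p n).coeff q = (fpart p n (m' + 1)).coeff q := by
      conv_lhs => rw [hsn]
      rw [HahnSeries.coeff_add, hrc, add_zero]
    rw [hsplit, HahnSeries.coeff_add, hrp, add_zero, hsc, fpart_pow, sum_coeff]
    simp only [nsmul_eq_mul]
    by_cases hex : ∃ k : ℕ, q = expo p k
    · obtain ⟨k, rfl⟩ := hex
      have hkm : k < m' := by
        by_contra hk
        exact absurd hqm (not_lt.2 (expo_mono p (by omega)))
      have hL : ∀ j ∈ Finset.Ico n (m' + 1),
          (HahnSeries.single ((p : ℚ) * expo p j) ((j.choose n : Fbar p))).coeff (expo p k)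
            = if j = k + 1 then ((j.choose n : Fbar p)) else 0 := by
        intro j _
        match j with
        | 0 =>
          rw [if_neg (by omega), psmul_expo_zero]
          exact HahnSeries.coeff_single_of_ne (expo_ne_neg_one p k)
        | (j' + 1) =>
          by_cases hj : j' + 1 = k + 1
          · have hj' : j' = k := by omega
            subst hj'
            rw [if_pos rfl, psmul_expo_succ, HahnSeries.coeff_single_same]
          · rw [if_neg hj, psmul_expo_succ]
            exact HahnSeries.coeff_single_of_ne
              (fun hc => hj (by rw [expo_inj p hc]))
      rw [Finset.sum_congr rfl hL,
        Finset.sum_ite_eq' (Finset.Ico n (m' + 1)) (k + 1)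
          (fun j => ((j.choose n : Fbar p))),
        fpart_coeff_expo, prv_coeff_expo]
      match n with
      | 0 =>
        rw [if_pos (Finset.mem_Ico.mpr ⟨by omega, by omega⟩),
          if_pos (Finset.mem_Ico.mpr ⟨by omega, by omega⟩), if_neg (by omega)]
        simp
      | (n' + 1) =>
        by_cases h1 : n' + 1 ≤ k
        · rw [if_pos (Finset.mem_Ico.mpr ⟨by omega, by omega⟩),
            if_pos (Finset.mem_Ico.mpr ⟨h1, by omega⟩), if_pos (by omega),
            show (n' + 1) - 1 = n' from rfl, Nat.choose_succ_succ k n']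
          push_cast
          ring
        · by_cases h2 : n' ≤ k
          · have hk : k = n' := by omega
            rw [if_pos (Finset.mem_Ico.mpr ⟨by omega, by omega⟩),
              if_neg (fun hmem => h1 (Finset.mem_Ico.mp hmem).1),
              if_pos (by omega), show (n' + 1) - 1 = n' from rfl, hk]
            simp
          · rw [if_neg (fun hmem => h2 (by
                have := (Finset.mem_Ico.mp hmem).1; omega)),
              if_neg (fun hmem => h2 (by
                have := (Finset.mem_Ico.mp hmem).1; omega)),
              if_neg (by omega)]
            simp
    · by_cases hq1 : q = -1
      · subst hq1
        have hL : ∀ j ∈ Finset.Ico n (m' + 1),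
            (HahnSeries.single ((p : ℚ) * expo p j) ((j.choose n : Fbar p))).coeff (-1 : ℚ)
              = if j = 0 then ((j.choose n : Fbar p)) else 0 := by
          intro j _
          match j with
          | 0 => rw [if_pos rfl, psmul_expo_zero, HahnSeries.coeff_single_same]
          | (j' + 1) =>
            rw [if_neg (by omega), psmul_expo_succ]
            exact HahnSeries.coeff_single_of_ne
              (fun hc => expo_ne_neg_one p j' hc.symm)
        rw [Finset.sum_congr rfl hL,
          Finset.sum_ite_eq' (Finset.Ico n (m' + 1)) 0
            (fun j => ((j.choose n : Fbar p))),
          fpart_coeff_of_ne p n _ (fun j => (expo_ne_neg_one p j).symm),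
          prv_coeff_neg_one, zero_add]
        by_cases hn : n = 0
        · subst hn
          rw [if_pos (Finset.mem_Ico.mpr ⟨le_refl 0, by omega⟩), if_pos rfl]
          simp
        · rw [if_neg (fun hmem => hn (Nat.le_zero.mp (Finset.mem_Ico.mp hmem).1)),
            if_neg hn]
      · push_neg at hex
        have hL : ∀ j ∈ Finset.Ico n (m' + 1),
            (HahnSeries.single ((p : ℚ) * expo p j) ((j.choose n : Fbar p))).coeff q = 0 := by
          intro j _
          match j with
          | 0 => rw [psmul_expo_zero]; exact HahnSeries.coeff_single_of_ne hq1
          | (j' + 1) => rw [psmul_expo_succ]; exact HahnSeries.coeff_single_of_ne (hex j')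
        rw [Finset.sum_eq_zero hL, fpart_coeff_of_ne p n _ hex,
          prv_coeff_other p n hex hq1, add_zero]

lemma frob_iter_sn (n : ℕ) :
    (fun y : H p => y ^ p - y)^[n + 1] (sn p n) = HahnSeries.single (-1 : ℚ) 1 := by
  induction n with
  | zero =>
    rw [Function.iterate_one]
    show sn p 0 ^ p - sn p 0 = HahnSeries.single (-1 : ℚ) 1
    rw [frob_sn]
    show sn p 0 + HahnSeries.single (-1 : ℚ) 1 - sn p 0 = HahnSeries.single (-1 : ℚ) 1
    ring
  | succ n ih =>
    rw [Function.iterate_succ_apply]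
    show (fun y : H p => y ^ p - y)^[n + 1] (sn p (n + 1) ^ p - sn p (n + 1))
      = HahnSeries.single (-1 : ℚ) 1
    rw [frob_sn]
    have h : sn p (n + 1) + prv p (n + 1) - sn p (n + 1) = sn p n := by
      show sn p (n + 1) + sn p n - sn p (n + 1) = sn p n
      ring
    rw [h]
    exact ih

lemma frob_iter_sub (k : ℕ) (x y : H p) :
    (fun y : H p => y ^ p - y)^[k] (x - y)
      = (fun y : H p => y ^ p - y)^[k] x - (fun y : H p => y ^ p - y)^[k] y := by
  induction k generalizing x y with
  | zero => rfl
  | succ k ih =>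
    rw [Function.iterate_succ_apply, Function.iterate_succ_apply,
      Function.iterate_succ_apply]
    have h : (x - y) ^ p - (x - y) = (x ^ p - x) - (y ^ p - y) := by
      rw [sub_pow_char]; ring
    show (fun y : H p => y ^ p - y)^[k] ((x - y) ^ p - (x - y)) = _
    rw [h]
    exact ih _ _

lemma frob_iter_add (k : ℕ) (x y : H p) :
    (fun y : H p => y ^ p - y)^[k] (x + y)
      = (fun y : H p => y ^ p - y)^[k] x + (fun y : H p => y ^ p - y)^[k] y := by
  induction k generalizing x y with
  | zero => rfl
  | succ k ih =>
    rw [Function.iterate_succ_apply, Function.iterate_succ_apply,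
      Function.iterate_succ_apply]
    have h : (x + y) ^ p - (x + y) = (x ^ p - x) + (y ^ p - y) := by
      rw [add_pow_char]; ring
    show (fun y : H p => y ^ p - y)^[k] ((x + y) ^ p - (x + y)) = _
    rw [h]
    exact ih _ _

lemma frob_iter_C (k : ℕ) (c : Fbar p) :
    (fun y : H p => y ^ p - y)^[k] ((HahnSeries.C c : H p))
      = HahnSeries.C ((fun y : Fbar p => y ^ p - y)^[k] c) := by
  induction k generalizing c with
  | zero => rfl
  | succ k ih =>
    rw [Function.iterate_succ_apply, Function.iterate_succ_apply]
    have h : (HahnSeries.C c : H p) ^ p - HahnSeries.C c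
        = HahnSeries.C (c ^ p - c) := by
      rw [map_sub, map_pow]
    rw [h, ih]

lemma eval_ASiterH (k : ℕ) (x : H p) :
    Polynomial.eval x (ASiterH p k) = (fun y : H p => y ^ p - y)^[k] x := by
  induction k with
  | zero =>
    simp [ASiterH]
  | succ k ih =>
    rw [show ASiterH p (k + 1) = ((X : Polynomial (H p)) ^ p - X).comp (ASiterH p k)
        from rfl,
      Polynomial.eval_comp, Function.iterate_succ_apply', ← ih]
    simp

/-- The Artin–Schreier iterate over `F`. -/
noncomputable def ASiterF : ℕ → Polynomial (Fbar p)
  | 0 => X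
  | (k + 1) => ((X : Polynomial (Fbar p)) ^ p - X).comp (ASiterF k)

lemma eval_ASiterF (k : ℕ) (x : Fbar p) :
    Polynomial.eval x (ASiterF p k) = (fun y : Fbar p => y ^ p - y)^[k] x := by
  induction k with
  | zero =>
    simp [ASiterF]
  | succ k ih =>
    rw [show ASiterF p (k + 1) = ((X : Polynomial (Fbar p)) ^ p - X).comp (ASiterF p k)
        from rfl,
      Polynomial.eval_comp, Function.iterate_succ_apply', ← ih]
    simp

lemma natDegree_ASpoly_F : ((X : Polynomial (Fbar p)) ^ p - X).natDegree = p := by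
  rw [Polynomial.natDegree_sub_eq_left_of_natDegree_lt, Polynomial.natDegree_X_pow]
  rw [Polynomial.natDegree_X_pow, Polynomial.natDegree_X]
  exact (Fact.out : p.Prime).one_lt

lemma natDegree_ASpoly_H : ((X : Polynomial (H p)) ^ p - X).natDegree = p := by
  rw [Polynomial.natDegree_sub_eq_left_of_natDegree_lt, Polynomial.natDegree_X_pow]
  rw [Polynomial.natDegree_X_pow, Polynomial.natDegree_X]
  exact (Fact.out : p.Prime).one_lt

lemma natDegree_ASiterF (k : ℕ) : (ASiterF p k).natDegree = p ^ k := by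
  induction k with
  | zero => simp [ASiterF]
  | succ k ih =>
    rw [show ASiterF p (k + 1) = ((X : Polynomial (Fbar p)) ^ p - X).comp (ASiterF p k)
        from rfl,
      Polynomial.natDegree_comp, natDegree_ASpoly_F, ih, pow_succ]
    ring

lemma natDegree_ASiterH (k : ℕ) : (ASiterH p k).natDegree = p ^ k := by
  induction k with
  | zero => simp [ASiterH]
  | succ k ih =>
    rw [show ASiterH p (k + 1) = ((X : Polynomial (H p)) ^ p - X).comp (ASiterH p k)
        from rfl,
      Polynomial.natDegree_comp, natDegree_ASpoly_H, ih, pow_succ]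
    ring

lemma ASiterH_ne_zero (k : ℕ) : ASiterH p k ≠ 0 := by
  intro h
  have h2 := natDegree_ASiterH p k
  rw [h, Polynomial.natDegree_zero] at h2
  have hp2 : 0 < p ^ k := pow_pos (Nat.Prime.pos Fact.out) k
  omega

lemma ASiterF_ne_zero (k : ℕ) : ASiterF p k ≠ 0 := by
  intro h
  have h2 := natDegree_ASiterF p k
  rw [h, Polynomial.natDegree_zero] at h2
  have hp2 : 0 < p ^ k := pow_pos (Nat.Prime.pos Fact.out) k
  omega

lemma derivative_ASiterF (k : ℕ) :
    Polynomial.derivative (ASiterF p k) = (-1 : Polynomial (Fbar p)) ^ k := by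
  induction k with
  | zero => simp [ASiterF]
  | succ k ih =>
    rw [show ASiterF p (k + 1) = ((X : Polynomial (Fbar p)) ^ p - X).comp (ASiterF p k)
        from rfl,
      Polynomial.derivative_comp, ih]
    have hd : Polynomial.derivative ((X : Polynomial (Fbar p)) ^ p - X) = -1 := by
      rw [Polynomial.derivative_sub, Polynomial.derivative_X_pow, Polynomial.derivative_X]
      simp [CharP.cast_eq_zero (Fbar p) p]
    rw [hd, show (-1 : Polynomial (Fbar p)) = Polynomial.C (-1) by simp,
      Polynomial.C_comp, pow_succ]

lemma separable_ASiterF (k : ℕ) : (ASiterF p k).Separable := by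
  refine ⟨0, (-1 : Polynomial (Fbar p)) ^ k, ?_⟩
  rw [derivative_ASiterF, zero_mul, zero_add, ← _root_.pow_add,
    show k + k = 2 * k by ring, pow_mul]
  norm_num

lemma card_rootsF (k : ℕ) :
    Set.ncard {c : Fbar p | (fun y : Fbar p => y ^ p - y)^[k] c = 0} = p ^ k := by
  classical
  have hne : ASiterF p k ≠ 0 := ASiterF_ne_zero p k
  have hset : {c : Fbar p | (fun y : Fbar p => y ^ p - y)^[k] c = 0}
      = ((ASiterF p k).roots.toFinset : Set (Fbar p)) := by
    ext c
    simp only [Set.mem_setOf_eq, Finset.mem_coe, Multiset.mem_toFinset,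
      Polynomial.mem_roots hne, Polynomial.IsRoot.def, eval_ASiterF]
  rw [hset, Set.ncard_coe_finset,
    Multiset.toFinset_card_of_nodup (Polynomial.nodup_roots (separable_ASiterF p k)),
    ← natDegree_ASiterF p k]
  exact Polynomial.splits_iff_card_roots.mp (IsAlgClosed.splits _)

lemma rootsH_eq (k : ℕ) :
    {u : H p | (fun y : H p => y ^ p - y)^[k] u = 0}
      = (fun c : Fbar p => (HahnSeries.C c : H p)) ''
          {c : Fbar p | (fun y : Fbar p => y ^ p - y)^[k] c = 0} := by
  classical
  symm
  have hsub : (fun c : Fbar p => (HahnSeries.C c : H p)) ''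
      {c : Fbar p | (fun y : Fbar p => y ^ p - y)^[k] c = 0}
      ⊆ {u : H p | (fun y : H p => y ^ p - y)^[k] u = 0} := by
    rintro u ⟨c, hc, rfl⟩
    simp only [Set.mem_setOf_eq] at hc ⊢
    rw [frob_iter_C, hc, map_zero]
  have hneH : ASiterH p k ≠ 0 := ASiterH_ne_zero p k
  have hsub2 : {u : H p | (fun y : H p => y ^ p - y)^[k] u = 0}
      ⊆ ((ASiterH p k).roots.toFinset : Set (H p)) := by
    intro u hu
    simp only [Set.mem_setOf_eq] at hu
    simp only [Finset.mem_coe, Multiset.mem_toFinset,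
      Polynomial.mem_roots hneH, Polynomial.IsRoot.def, eval_ASiterH]
    exact hu
  have hfin : ({u : H p | (fun y : H p => y ^ p - y)^[k] u = 0}).Finite :=
    Set.Finite.subset ((ASiterH p k).roots.toFinset.finite_toSet) hsub2
  refine Set.eq_of_subset_of_ncard_le hsub ?_ hfin
  have hc1 : ({u : H p | (fun y : H p => y ^ p - y)^[k] u = 0}).ncard ≤ p ^ k := by
    calc ({u : H p | (fun y : H p => y ^ p - y)^[k] u = 0}).ncard
        ≤ (((ASiterH p k).roots.toFinset : Set (H p))).ncard :=
          Set.ncard_le_ncard hsub2 ((ASiterH p k).roots.toFinset.finite_toSet)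
      _ = (ASiterH p k).roots.toFinset.card := Set.ncard_coe_finset _
      _ ≤ Multiset.card (ASiterH p k).roots := Multiset.toFinset_card_le _
      _ ≤ (ASiterH p k).natDegree := Polynomial.card_roots' _
      _ = p ^ k := natDegree_ASiterH p k
  have hc2 : ((fun c : Fbar p => (HahnSeries.C c : H p)) ''
      {c : Fbar p | (fun y : Fbar p => y ^ p - y)^[k] c = 0}).ncard = p ^ k := by
    rw [Set.ncard_image_of_injective _ (HahnSeries.C_injective (Γ := ℚ) (R := Fbar p)),
      card_rootsF]
  rw [hc2]
  exact hc1

end ASMain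

/-- the set of roots in `H` of `AS^(n+1)(x) - t⁻¹` equals
`{sₙ + c : c ∈ F, AS^(n+1)(c) = 0}` (constants viewed in `H`); it has exactly `p^(n+1)`
elements, and every root `u ≠ sₙ` satisfies `v(sₙ - u) = 0`. -/
theorem AS_roots_krasner (n : ℕ) :
    {u : H p | Polynomial.eval u
        (ASiterH p (n + 1) - Polynomial.C (HahnSeries.single (-1 : ℚ) (1 : Fbar p))) = 0}
      = {u : H p | ∃ c : Fbar p, (fun y : Fbar p => y ^ p - y)^[n + 1] c = 0 ∧
          u = sn p n + HahnSeries.C c} ∧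
    Set.ncard {u : H p | Polynomial.eval u
        (ASiterH p (n + 1) - Polynomial.C (HahnSeries.single (-1 : ℚ) (1 : Fbar p))) = 0} = p ^ (n + 1) ∧
    ∀ u : H p, Polynomial.eval u
        (ASiterH p (n + 1) - Polynomial.C (HahnSeries.single (-1 : ℚ) (1 : Fbar p))) = 0 →
      u ≠ sn p n → v p (sn p n - u) = ((0 : ℚ) : WithTop ℚ) := by
  
  have hroot : ∀ u : H p,
      Polynomial.eval u
        (ASiterH p (n + 1) - Polynomial.C (HahnSeries.single (-1 : ℚ) (1 : Fbar p))) = 0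
        ↔ ∃ c : Fbar p, (fun y : Fbar p => y ^ p - y)^[n + 1] c = 0 ∧
            u = sn p n + HahnSeries.C c := by
    intro u
    rw [Polynomial.eval_sub, Polynomial.eval_C, sub_eq_zero, eval_ASiterH]
    constructor
    · intro h
      have h2 : (fun y : H p => y ^ p - y)^[n + 1] (u - sn p n) = 0 := by
        rw [frob_iter_sub, h, frob_iter_sn, sub_self]
      have h3 : u - sn p n ∈ (fun c : Fbar p => (HahnSeries.C c : H p)) ''
          {c : Fbar p | (fun y : Fbar p => y ^ p - y)^[n + 1] c = 0} := by
        rw [← rootsH_eq]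
        exact h2
      obtain ⟨c, hc, hceq⟩ := h3
      refine ⟨c, hc, ?_⟩
      have h4 : (HahnSeries.C c : H p) = u - sn p n := hceq
      rw [h4]
      ring
    · rintro ⟨c, hc, rfl⟩
      rw [frob_iter_add, frob_iter_sn, frob_iter_C, hc, map_zero, add_zero]
  refine ⟨Set.ext fun u => ?_, ?_, ?_⟩
  · simp only [Set.mem_setOf_eq]
    exact hroot u
  · have h1 : {u : H p | Polynomial.eval u
        (ASiterH p (n + 1) - Polynomial.C (HahnSeries.single (-1 : ℚ) (1 : Fbar p))) = 0}
        = (fun c : Fbar p => sn p n + HahnSeries.C c) ''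
            {c : Fbar p | (fun y : Fbar p => y ^ p - y)^[n + 1] c = 0} := by
      ext u
      simp only [Set.mem_setOf_eq, Set.mem_image]
      rw [hroot u]
      constructor
      · rintro ⟨c, hc, rfl⟩; exact ⟨c, hc, rfl⟩
      · rintro ⟨c, hc, rfl⟩; exact ⟨c, hc, rfl⟩
    have hinj : Function.Injective (fun c : Fbar p => sn p n + HahnSeries.C c) := by
      intro a b hab
      have hab' : sn p n + (HahnSeries.C a : H p) = sn p n + HahnSeries.C b := hab
      exact HahnSeries.C_injective (add_left_cancel hab')
    rw [h1, Set.ncard_image_of_injective _ hinj, card_rootsF]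
  · intro u hu hne
    obtain ⟨c, hc, rfl⟩ := (hroot u).mp hu
    have hc0 : c ≠ 0 := by
      intro h
      apply hne
      rw [h, map_zero, add_zero]
    have heq : sn p n - (sn p n + HahnSeries.C c)
        = -(HahnSeries.single (0 : ℚ) c) := by
      rw [HahnSeries.C_apply]
      ring
    show (sn p n - (sn p n + HahnSeries.C c)).orderTop = ((0 : ℚ) : WithTop ℚ)
    rw [heq, HahnSeries.orderTop_neg, HahnSeries.orderTop_single hc0]
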